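/- In the SCM with X₁=N₁, X₂=N₂, Y=X₁+X₂+U where N₁,N₂,U are independent standard Gaussians, X₁ and X₂ are causally independent on σ(Y): for every y ∈ ℝ and all Borel sets A, B ⊆ ℝ, the causal kernel obtained by intervening on Y satisfies K_Y(y, {X₁∈A, X₂∈B}) = K_Y(y, {X₁∈A}) · K_Y(y, {X₂∈B}), both sides being equal to ℙ(X₁∈A)·ℙ(X₂∈B). However, X₁ and X₂ are not conditionally independent given Y under ℙ. -/

import Mathlib

open MeasureTheory ProbabilityTheory

open Real

namespace CINCIaux

noncomputable abbrev γ : Measure ℝ := gaussianReal 0 1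
noncomputable abbrev ν : Measure (ℝ × ℝ × ℝ) := γ.prod (γ.prod γ)
abbrev F : ℝ × ℝ × ℝ → ℝ × ℝ × ℝ := fun p => (p.1, p.2.1, p.1 + p.2.1 + p.2.2)
abbrev S : ℝ × ℝ × ℝ → ℝ × ℝ × ℝ := fun p => (p.2.1, p.1, p.2.2)
abbrev m' : MeasurableSpace (ℝ × ℝ × ℝ) :=
  MeasurableSpace.comap (fun p : ℝ × ℝ × ℝ => p.2.2) inferInstance



lemma integrable_poly_pdf {f : ℝ → ℝ} (hf : Integrable (fun x => f x * rexp (-(2:ℝ)⁻¹ * x ^ 2)) volume) :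
    Integrable f γ := by
  rw [show γ = volume.withDensity (gaussianPDF 0 1) from gaussianReal_of_var_ne_zero 0 one_ne_zero,
    integrable_withDensity_iff (measurable_gaussianPDF 0 1) (ae_of_all _ fun x => ENNReal.ofReal_lt_top)]
  have : (fun x => f x * (gaussianPDF 0 1 x).toReal)
      = fun x => (√(2 * π))⁻¹ * (f x * rexp (-(2:ℝ)⁻¹ * x ^ 2)) := by
    funext x
    rw [gaussianPDF, ENNReal.toReal_ofReal (gaussianPDFReal_nonneg 0 1 x), gaussianPDFReal]
    push_cast
    ring_nf
  rw [this]
  exact hf.const_mul _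

lemma integrable_id_g : Integrable (fun x : ℝ => x) γ := by
  apply integrable_poly_pdf
  simpa using integrable_mul_exp_neg_mul_sq (by norm_num : (0:ℝ) < 2⁻¹)

lemma integrable_sq_g : Integrable (fun x : ℝ => x ^ 2) γ := by
  apply integrable_poly_pdf
  have := integrable_rpow_mul_exp_neg_mul_sq (by norm_num : (0:ℝ) < 2⁻¹) (by norm_num : (-1:ℝ) < 2)
  apply this.congr
  filter_upwards with x
  rw [show ((2:ℝ) : ℝ) = ((2:ℕ) : ℝ) by norm_num, Real.rpow_natCast]

lemma integral_id_g : ∫ x, x ∂γ = 0 := by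
  have hmap : Measure.map (fun x : ℝ => -x) γ = γ := by
    have h := gaussianReal_map_const_mul (μ := 0) (v := 1) (-1)
    have h2 : (fun x : ℝ => -x) = ((-1 : ℝ) * ·) := by funext x; ring
    have h3 : (⟨(-1:ℝ)^2, sq_nonneg _⟩ : NNReal) = 1 := by ext; norm_num
    rw [h2, h]
    show gaussianReal _ _ = gaussianReal 0 1
    congr 1
    · norm_num
    · ext; simp
  have h1 : ∫ x, x ∂γ = ∫ x, x ∂(Measure.map (fun x : ℝ => -x) γ) := by rw [hmap]
  have h2 : ∫ x, x ∂(Measure.map (fun x : ℝ => -x) γ) = ∫ x, -x ∂γ :=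
    integral_map (by fun_prop) aestronglyMeasurable_id
  rw [h2, integral_neg] at h1
  linarith

lemma gauss_zero : γ {(0:ℝ)} = 0 := by
  rw [gaussianReal_apply 0 one_ne_zero, setLIntegral_measure_zero _ _ (measure_singleton 0)]

lemma integral_sq_g_pos : 0 < ∫ x, x ^ 2 ∂γ := by
  rcases lt_or_eq_of_le (integral_nonneg (fun x => sq_nonneg x) : 0 ≤ ∫ x, x ^ 2 ∂γ) with h | h
  · exact h
  exfalso
  have h0 : (fun x : ℝ => x ^ 2) =ᵐ[γ] 0 :=
    (integral_eq_zero_iff_of_nonneg (fun x => sq_nonneg x) integrable_sq_g).mp h.symm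
  have h1 : ∀ᵐ x ∂γ, x ∈ ({(0:ℝ)} : Set ℝ) := by
    filter_upwards [h0] with x hx
    simpa using pow_eq_zero_iff (n := 2) (by norm_num) |>.mp hx
  have h2 : γ {(0:ℝ)}ᶜ = 0 := by
    exact ae_iff.mp h1
  have h3 := measure_univ_le_add_compl (μ := γ) ({(0:ℝ)} : Set ℝ)
  rw [gauss_zero, h2, measure_univ] at h3
  simp at h3



lemma hFmeas : Measurable F := by fun_prop
lemma hSmeas : Measurable S := by fun_prop

lemma P_fst (A : Set ℝ) (hA : MeasurableSet A) :
    (Measure.map F ν) {p : ℝ × ℝ × ℝ | p.1 ∈ A} = γ A := by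
  rw [Measure.map_apply hFmeas (by exact (hA.preimage measurable_fst))]
  have : F ⁻¹' {p : ℝ × ℝ × ℝ | p.1 ∈ A} = A ×ˢ (Set.univ : Set (ℝ × ℝ)) := by ext p; simp
  rw [this, Measure.prod_prod]; simp

lemma P_snd (B : Set ℝ) (hB : MeasurableSet B) :
    (Measure.map F ν) {p : ℝ × ℝ × ℝ | p.2.1 ∈ B} = γ B := by
  rw [Measure.map_apply hFmeas (by exact (hB.preimage (measurable_fst.comp measurable_snd)))]
  have : F ⁻¹' {p : ℝ × ℝ × ℝ | p.2.1 ∈ B}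
      = (Set.univ : Set ℝ) ×ˢ (B ×ˢ (Set.univ : Set ℝ)) := by ext p; simp
  rw [this, Measure.prod_prod, Measure.prod_prod]; simp

lemma P_inter (A B : Set ℝ) (hA : MeasurableSet A) (hB : MeasurableSet B) :
    (Measure.map F ν) ({p : ℝ × ℝ × ℝ | p.1 ∈ A} ∩ {p : ℝ × ℝ × ℝ | p.2.1 ∈ B})
      = γ A * γ B := by
  rw [Measure.map_apply hFmeas
    (by exact (hA.preimage measurable_fst).inter (hB.preimage (measurable_fst.comp measurable_snd)))]
  have : F ⁻¹' ({p : ℝ × ℝ × ℝ | p.1 ∈ A} ∩ {p : ℝ × ℝ × ℝ | p.2.1 ∈ B})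
      = A ×ˢ (B ×ˢ (Set.univ : Set ℝ)) := by ext p; simp [and_comm]
  rw [this, Measure.prod_prod, Measure.prod_prod]; simp

lemma map_S : Measure.map S ν = ν := by
  have h1 : ν = Measure.map (MeasurableEquiv.prodAssoc : (ℝ × ℝ) × ℝ ≃ᵐ ℝ × ℝ × ℝ)
      (((γ).prod γ).prod γ) := (Measure.prodAssoc_prod).symm
  rw [h1, Measure.map_map hSmeas MeasurableEquiv.prodAssoc.measurable]
  have h2 : (S ∘ (MeasurableEquiv.prodAssoc : (ℝ × ℝ) × ℝ ≃ᵐ ℝ × ℝ × ℝ))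
      = (MeasurableEquiv.prodAssoc : (ℝ × ℝ) × ℝ ≃ᵐ ℝ × ℝ × ℝ) ∘ (Prod.map Prod.swap id) := by
    ext p <;> rfl
  rw [h2, ← Measure.map_map MeasurableEquiv.prodAssoc.measurable (by fun_prop),
    ← Measure.map_prod_map _ _ measurable_swap measurable_id, Measure.prod_swap, Measure.map_id]

lemma map_T : Measure.map S (Measure.map F ν) = Measure.map F ν := by
  rw [Measure.map_map hSmeas hFmeas]
  have : (S ∘ F) = F ∘ S := by funext p; simp [Prod.ext_iff]; ring
  rw [this, ← Measure.map_map hFmeas hSmeas, map_S]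




lemma int_fst : Integrable (fun p : ℝ × ℝ × ℝ => p.1) ν := by
  have := integrable_id_g.mul_prod (integrable_const (1:ℝ) (μ := γ.prod γ))
  simpa using this

lemma int_sq_fst : Integrable (fun p : ℝ × ℝ × ℝ => p.1 * p.1) ν := by
  have := (integrable_sq_g).mul_prod (integrable_const (1:ℝ) (μ := γ.prod γ))
  apply this.congr
  filter_upwards with p
  ring

lemma int_21 : Integrable (fun p : ℝ × ℝ × ℝ => p.1 * p.2.1) ν := by
  have hg : Integrable (fun w : ℝ × ℝ => w.1) (γ.prod γ) := by
    simpa using integrable_id_g.mul_prod (integrable_const (1:ℝ) (μ := γ))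
  exact integrable_id_g.mul_prod hg

lemma int_22 : Integrable (fun p : ℝ × ℝ × ℝ => p.1 * p.2.2) ν := by
  have hg : Integrable (fun w : ℝ × ℝ => w.2) (γ.prod γ) := by
    simpa using (integrable_const (1:ℝ) (μ := γ)).mul_prod integrable_id_g
  exact integrable_id_g.mul_prod hg

lemma integral_fst_P : ∫ p, p.1 ∂(Measure.map F ν) = 0 := by
  rw [integral_map hFmeas.aemeasurable measurable_fst.aestronglyMeasurable]
  have := integral_prod_mul (μ := γ) (ν := γ.prod γ) (fun x : ℝ => x) (fun _ => (1:ℝ))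
  simpa [integral_id_g] using this

lemma integral_mul_P : ∫ p, p.1 * p.2.2 ∂(Measure.map F ν) = ∫ x, x ^ 2 ∂γ := by
  rw [integral_map hFmeas.aemeasurable
    (by exact (measurable_fst.mul (measurable_snd.snd)).aestronglyMeasurable)]
  have hre : (fun p : ℝ × ℝ × ℝ => (F p).1 * (F p).2.2)
      = fun p : ℝ × ℝ × ℝ => p.1 * p.1 + (p.1 * p.2.1 + p.1 * p.2.2) := by
    funext p; simp [F]; ring
  have h23 : Integrable (fun p : ℝ × ℝ × ℝ => p.1 * p.2.1 + p.1 * p.2.2) ν := by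
    exact int_21.add int_22
  rw [hre, integral_add int_sq_fst h23, integral_add int_21 int_22]
  have e1 : ∫ p : ℝ × ℝ × ℝ, p.1 * p.1 ∂ν = ∫ x, x ^ 2 ∂γ := by
    have := integral_prod_mul (μ := γ) (ν := γ.prod γ) (fun x : ℝ => x ^ 2) (fun _ => (1:ℝ))
    simp only [mul_one, integral_const, measure_univ, ENNReal.toReal_one, smul_eq_mul,
      one_mul, probReal_univ] at this
    rw [← this]
    congr 1
    funext p
    ring
  have e2 : ∫ p : ℝ × ℝ × ℝ, p.1 * p.2.1 ∂ν = 0 := by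
    have hg : ∫ w : ℝ × ℝ, w.1 ∂(γ.prod γ) = 0 := by
      have := integral_prod_mul (μ := γ) (ν := γ) (fun x : ℝ => x) (fun _ => (1:ℝ))
      simpa [integral_id_g] using this
    have := integral_prod_mul (μ := γ) (ν := γ.prod γ) (fun x : ℝ => x) (fun w : ℝ × ℝ => w.1)
    simpa [integral_id_g] using this
  have e3 : ∫ p : ℝ × ℝ × ℝ, p.1 * p.2.2 ∂ν = 0 := by
    have := integral_prod_mul (μ := γ) (ν := γ.prod γ) (fun x : ℝ => x) (fun w : ℝ × ℝ => w.2)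
    simpa [integral_id_g] using this
  rw [e1, e2, e3]
  ring

lemma no_indep (h : IndepFun (fun p : ℝ × ℝ × ℝ => p.1) (fun p : ℝ × ℝ × ℝ => p.2.2)
    (Measure.map F ν)) : False := by
  have hmul := h.integral_mul_eq_mul_integral measurable_fst.aestronglyMeasurable
    (measurable_snd.snd).aestronglyMeasurable
  have : ∫ p, p.1 * p.2.2 ∂(Measure.map F ν) = 0 := by
    have h2 : ((fun p : ℝ × ℝ × ℝ => p.1) * fun p : ℝ × ℝ × ℝ => p.2.2)
        = fun p : ℝ × ℝ × ℝ => p.1 * p.2.2 := rfl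
    rw [h2] at hmul
    rw [hmul, integral_fst_P, zero_mul]
  rw [integral_mul_P] at this
  exact absurd this (ne_of_gt integral_sq_g_pos)






lemma cond_to_indep (hm : m' ≤ (inferInstance : MeasurableSpace (ℝ × ℝ × ℝ)))
    (H : CondIndepFun m' hm (fun p : ℝ × ℝ × ℝ => p.1) (fun p : ℝ × ℝ × ℝ => p.2.1)
      (Measure.map F ν)) :
    IndepFun (fun p : ℝ × ℝ × ℝ => p.1) (fun p : ℝ × ℝ × ℝ => p.2.2) (Measure.map F ν) := by
  set P : Measure (ℝ × ℝ × ℝ) := Measure.map F ν with hPdef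
  haveI : IsProbabilityMeasure P := Measure.isProbabilityMeasure_map hFmeas.aemeasurable
  have key : ∀ s : Set ℝ, MeasurableSet s → ∀ C : Set (ℝ × ℝ × ℝ), MeasurableSet[m'] C →
      P ((fun p : ℝ × ℝ × ℝ => p.1) ⁻¹' s ∩ C) = γ s * P C := by
    intro s hs C hC
    set A : Set (ℝ × ℝ × ℝ) := (fun p : ℝ × ℝ × ℝ => p.1) ⁻¹' s with hAdef
    set B : Set (ℝ × ℝ × ℝ) := (fun p : ℝ × ℝ × ℝ => p.2.1) ⁻¹' s with hBdef
    have hA : MeasurableSet A := hs.preimage measurable_fst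
    have hB : MeasurableSet B := hs.preimage (measurable_fst.comp measurable_snd)
    have hintA : Integrable (A.indicator fun _ => (1:ℝ)) P := (integrable_const 1).indicator hA
    have hintB : Integrable (B.indicator fun _ => (1:ℝ)) P := (integrable_const 1).indicator hB
    -- swap symmetry
    have step1 : ∀ C : Set (ℝ × ℝ × ℝ), MeasurableSet[m'] C → P (B ∩ C) = P (A ∩ C) := by
      rintro C ⟨c, hc, rfl⟩
      have hCm : MeasurableSet ((fun p : ℝ × ℝ × ℝ => p.2.2) ⁻¹' c) :=
        hc.preimage (measurable_snd.snd)
      have hset : B ∩ (fun p : ℝ × ℝ × ℝ => p.2.2) ⁻¹' c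
          = S ⁻¹' (A ∩ (fun p : ℝ × ℝ × ℝ => p.2.2) ⁻¹' c) := by
        ext p; simp [hAdef, hBdef]
      rw [hset, ← Measure.map_apply hSmeas (hA.inter hCm), hPdef, map_T]
    -- condexp indicators agree
    have step2 : P⟦B|m'⟧ =ᵐ[P] P⟦A|m'⟧ := by
      refine ae_eq_condExp_of_forall_setIntegral_eq hm hintA
        (fun C hC _ => integrable_condExp.integrableOn)
        (fun C hC _ => ?_) stronglyMeasurable_condExp.aestronglyMeasurable
      rw [setIntegral_condExp hm hintB hC, setIntegral_indicator hA, setIntegral_indicator hB,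
        setIntegral_const, setIntegral_const, measureReal_def, measureReal_def, Set.inter_comm C A, Set.inter_comm C B,
        step1 C hC]
    have hcond := (condIndepFun_iff_condExp_inter_preimage_eq_mul
      (measurable_fst) (measurable_fst.comp measurable_snd)).mp H s s hs hs
    set h : (ℝ × ℝ × ℝ) → ℝ := P⟦A|m'⟧ with hhdef
    set a : ℝ := (γ s).toReal with hadef
    have hint_h : Integrable h P := integrable_condExp
    have h_nonneg : 0 ≤ᵐ[P] h :=
      condExp_nonneg (ae_of_all _ fun ω => Set.indicator_nonneg (fun _ _ => zero_le_one) ω)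
    have h_le_one : h ≤ᵐ[P] fun _ => (1:ℝ) := by
      have hle : A.indicator (fun _ => (1:ℝ)) ≤ᵐ[P] fun _ => (1:ℝ) := by
        refine ae_of_all _ fun ω => ?_
        by_cases hω : ω ∈ A <;> simp [Set.indicator_of_mem, Set.indicator_of_notMem, hω]
      exact (condExp_mono hintA (integrable_const 1) hle).trans
        (ae_of_all _ fun x => le_of_eq (congrFun (condExp_const (μ := P) hm (1:ℝ)) x))
    -- integrals
    have int_h : ∫ ω, h ω ∂P = a := by
      rw [hhdef, integral_condExp hm, integral_indicator_const (1:ℝ) hA, smul_eq_mul, mul_one,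
        measureReal_def, hadef]
      congr 1
      rw [hAdef, show (fun p : ℝ × ℝ × ℝ => p.1) ⁻¹' s = {p : ℝ × ℝ × ℝ | p.1 ∈ s} from rfl,
        P_fst s hs]
    have Ihh : Integrable (fun ω => h ω * h ω) P := by
      refine Integrable.mono' (integrable_const (1:ℝ))
        ((stronglyMeasurable_condExp.mono hm).aestronglyMeasurable.mul
          (stronglyMeasurable_condExp.mono hm).aestronglyMeasurable) ?_
      filter_upwards [h_nonneg, h_le_one] with ω h0 h1
      have h0 : (0:ℝ) ≤ h ω := h0
      have : h ω * h ω ≤ 1 := by nlinarith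
      rw [Real.norm_eq_abs, abs_of_nonneg (mul_nonneg h0 h0)]
      exact this
    have hcond' : P⟦A ∩ B|m'⟧ =ᵐ[P] fun ω => h ω * (P⟦B|m'⟧) ω := hcond
    have int_hh : ∫ ω, h ω * h ω ∂P = a * a := by
      have e1 : ∫ ω, h ω * h ω ∂P = ∫ ω, (P⟦A ∩ B|m'⟧) ω ∂P := by
        refine integral_congr_ae ?_
        filter_upwards [hcond', step2] with ω h1 h2
        rw [h1, h2]
      rw [e1, integral_condExp hm, integral_indicator_const (1:ℝ) (hA.inter hB), smul_eq_mul,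
        mul_one, measureReal_def]
      have : P (A ∩ B) = γ s * γ s := by
        rw [hAdef, hBdef]
        exact P_inter s s hs hs
      rw [this, ENNReal.toReal_mul, hadef]
    -- h is a.e. constant
    have heq : h =ᵐ[P] fun _ => a := by
      have Isq : Integrable (fun ω => (h ω - a) ^ 2) P := by
        have : (fun ω => (h ω - a) ^ 2)
            = fun ω => (h ω * h ω - (2 * a) * h ω) + a ^ 2 := by funext ω; ring
        rw [this]
        exact ((Ihh.sub (hint_h.const_mul _)).add (integrable_const _))
      have hzero : ∫ ω, (h ω - a) ^ 2 ∂P = 0 := by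
        have e : (fun ω => (h ω - a) ^ 2)
            = fun ω => (h ω * h ω - (2 * a) * h ω) + a ^ 2 := by funext ω; ring
        rw [e]
        rw [integral_add (μ := P) (f := fun ω => h ω * h ω - 2 * a * h ω)
          (g := fun _ => a ^ 2) (Ihh.sub (hint_h.const_mul _)) (integrable_const _)]
        rw [integral_sub (μ := P) (f := fun ω => h ω * h ω) (g := fun ω => 2 * a * h ω)
          Ihh (hint_h.const_mul _)]
        rw [integral_const_mul, int_h, int_hh, integral_const, measureReal_def, measure_univ,
          ENNReal.toReal_one, one_smul]
        ring
      have := (integral_eq_zero_iff_of_nonneg (fun ω => sq_nonneg _) Isq).mp hzero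
      filter_upwards [this] with ω hω
      have : h ω - a = 0 := by
        have := pow_eq_zero_iff (n := 2) (by norm_num) |>.mp hω
        exact this
      linarith
    -- conclude
    have lhs_eq : ∫ x in C, h x ∂P = (P (A ∩ C)).toReal := by
      rw [hhdef, setIntegral_condExp hm hintA hC, setIntegral_indicator hA, setIntegral_const,
        smul_eq_mul, mul_one, Set.inter_comm, measureReal_def]
    have rhs_eq : ∫ x in C, h x ∂P = a * (P C).toReal := by
      have hCm : MeasurableSet C := hm C hC
      rw [setIntegral_congr_ae hCm (by filter_upwards [heq] with x hx _ using hx),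
        setIntegral_const, smul_eq_mul, mul_comm, measureReal_def]
    have htr : (P (A ∩ C)).toReal = (γ s * P C).toReal := by
      rw [← lhs_eq, rhs_eq, ENNReal.toReal_mul, hadef]
    exact (ENNReal.toReal_eq_toReal_iff' (measure_ne_top _ _)
      (ENNReal.mul_ne_top (measure_ne_top _ _) (measure_ne_top _ _))).mp htr
  refine (indepFun_iff_measure_inter_preimage_eq_mul).mpr fun s t hs ht => ?_
  have h1 := key s hs ((fun p : ℝ × ℝ × ℝ => p.2.2) ⁻¹' t) ⟨t, ht, rfl⟩
  rw [h1]
  congr 1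
  rw [show (fun p : ℝ × ℝ × ℝ => p.1) ⁻¹' s = {p : ℝ × ℝ × ℝ | p.1 ∈ s} from rfl, P_fst s hs]

lemma set1 (A : Set ℝ) : {p : ℝ × ℝ × ℝ | p.1 ∈ A} = A ×ˢ (Set.univ : Set (ℝ × ℝ)) := by
  ext p; simp

lemma set2 (B : Set ℝ) : {p : ℝ × ℝ × ℝ | p.2.1 ∈ B}
    = (Set.univ : Set ℝ) ×ˢ (B ×ˢ (Set.univ : Set ℝ)) := by ext p; simp

lemma set12 (A B : Set ℝ) : {p : ℝ × ℝ × ℝ | p.1 ∈ A} ∩ {p : ℝ × ℝ × ℝ | p.2.1 ∈ B}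
    = A ×ˢ (B ×ˢ (Set.univ : Set ℝ)) := by ext p; simp [and_comm]

lemma ky_inter (y : ℝ) (A B : Set ℝ) (hA : MeasurableSet A) (hB : MeasurableSet B) :
    ((gaussianReal 0 1).prod ((gaussianReal 0 1).prod (Measure.dirac y)))
      ({p : ℝ × ℝ × ℝ | p.1 ∈ A} ∩ {p : ℝ × ℝ × ℝ | p.2.1 ∈ B})
      = gaussianReal 0 1 A * gaussianReal 0 1 B := by
  rw [set12, Measure.prod_prod, Measure.prod_prod]
  simp

lemma ky_fst (y : ℝ) (A : Set ℝ) :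
    ((gaussianReal 0 1).prod ((gaussianReal 0 1).prod (Measure.dirac y)))
      {p : ℝ × ℝ × ℝ | p.1 ∈ A} = gaussianReal 0 1 A := by
  rw [set1, Measure.prod_prod]
  simp

lemma ky_snd (y : ℝ) (B : Set ℝ) :
    ((gaussianReal 0 1).prod ((gaussianReal 0 1).prod (Measure.dirac y)))
      {p : ℝ × ℝ × ℝ | p.2.1 ∈ B} = gaussianReal 0 1 B := by
  rw [set2, Measure.prod_prod, Measure.prod_prod]
  simp

end CINCIaux


open CINCIaux in
/-- In the SCM `X₁ = N₁`, `X₂ = N₂`, `Y = X₁ + X₂ + U` with `N₁, N₂, U`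
independent standard Gaussians (joint law `ℙ` of `(X₁, X₂, Y)` on `ℝ³`), `X₁` and `X₂` are
causally independent on `σ(Y)`: for the causal kernel
`K_Y(y, ·) = N(0,1) ⊗ N(0,1) ⊗ δ_y` of intervening on `Y`, for every `y` and Borel `A, B`,
`K_Y(y, {X₁ ∈ A} ∩ {X₂ ∈ B}) = K_Y(y, {X₁ ∈ A}) · K_Y(y, {X₂ ∈ B})`, both sides being
`ℙ(X₁ ∈ A) · ℙ(X₂ ∈ B)`.  However, `X₁` and `X₂` are not conditionally independent
given `Y` under `ℙ`. -/
theorem causally_independent_not_conditionally_independent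
    (P : Measure (ℝ × ℝ × ℝ)) [IsProbabilityMeasure P]
    (hP : P = Measure.map (fun p : ℝ × ℝ × ℝ => (p.1, p.2.1, p.1 + p.2.1 + p.2.2))
        ((gaussianReal 0 1).prod ((gaussianReal 0 1).prod (gaussianReal 0 1))))
    (KY : ℝ → Measure (ℝ × ℝ × ℝ))
    (hKY : ∀ y : ℝ, KY y = (gaussianReal 0 1).prod ((gaussianReal 0 1).prod (Measure.dirac y)))
    (hm : MeasurableSpace.comap (fun p : ℝ × ℝ × ℝ => p.2.2) inferInstance
        ≤ (inferInstance : MeasurableSpace (ℝ × ℝ × ℝ))) :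
    (∀ y : ℝ, ∀ A B : Set ℝ, MeasurableSet A → MeasurableSet B →
      KY y ({p : ℝ × ℝ × ℝ | p.1 ∈ A} ∩ {p : ℝ × ℝ × ℝ | p.2.1 ∈ B})
          = KY y {p : ℝ × ℝ × ℝ | p.1 ∈ A} * KY y {p : ℝ × ℝ × ℝ | p.2.1 ∈ B} ∧
      KY y ({p : ℝ × ℝ × ℝ | p.1 ∈ A} ∩ {p : ℝ × ℝ × ℝ | p.2.1 ∈ B})
          = gaussianReal 0 1 A * gaussianReal 0 1 B ∧
      P {p : ℝ × ℝ × ℝ | p.1 ∈ A} = gaussianReal 0 1 A ∧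
      P {p : ℝ × ℝ × ℝ | p.2.1 ∈ B} = gaussianReal 0 1 B) ∧
    ¬ CondIndepFun (MeasurableSpace.comap (fun p : ℝ × ℝ × ℝ => p.2.2) inferInstance) hm
        (fun p : ℝ × ℝ × ℝ => p.1) (fun p : ℝ × ℝ × ℝ => p.2.1) P := by
  subst hP
  constructor
  · intro y A B hA hB
    refine ⟨?_, ?_, ?_, ?_⟩
    · rw [hKY y, ky_inter y A B hA hB, ky_fst y A, ky_snd y B]
    · rw [hKY y]; exact ky_inter y A B hA hB
    · exact P_fst A hA
    · exact P_snd B hB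
  · intro H
    exact no_indep (cond_to_indep hm H)
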